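/- For every x > 0 and every ν > -3/2, the modified Bessel function of the first kind satisfies the strict inequality I_ν(x) < ((ν+2)/Γ(ν+2))·(x/2)^ν·e^{2x}. -/

import Mathlib

/-- The modified Bessel function of the first kind of order `ν`, with the convention that
`1/Γ` vanishes at the poles of `Γ` (which is Mathlib's convention for `Real.Gamma`). -/
noncomputable def besselI (ν x : ℝ) : ℝ :=
  ∑' m : ℕ, (x / 2) ^ (2 * (m : ℝ) + ν) / ((m.factorial : ℝ) * Real.Gamma ((m : ℝ) + ν + 1))

private lemma besselI_key (ν : ℝ) (hν : -(3 : ℝ) / 2 < ν) : ∀ m : ℕ, 1 ≤ m →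
    Real.Gamma (ν + 2) * ((2 * m).factorial : ℝ) ≤
      (ν + 2) * 16 ^ m * (m.factorial : ℝ) * Real.Gamma ((m : ℝ) + ν + 1) := by
  have hG : 0 < Real.Gamma (ν + 2) := Real.Gamma_pos_of_pos (by linarith)
  refine Nat.le_induction ?_ ?_
  · have h1 : ((1 : ℕ) : ℝ) + ν + 1 = ν + 2 := by push_cast; ring
    rw [h1]
    norm_num
    nlinarith
  · intro m hm IH
    have hm' : (1 : ℝ) ≤ (m : ℝ) := by exact_mod_cast hm
    have hpos : (0 : ℝ) < (m : ℝ) + ν + 1 := by linarith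
    have hΓpos : 0 < Real.Gamma ((m : ℝ) + ν + 1) := Real.Gamma_pos_of_pos hpos
    have e1 : 2 * (m + 1) = (2 * m + 1) + 1 := by ring
    have e2 : ((m + 1 : ℕ) : ℝ) + ν + 1 = ((m : ℝ) + ν + 1) + 1 := by push_cast; ring
    rw [e1, Nat.factorial_succ, Nat.factorial_succ, Nat.factorial_succ, e2,
      Real.Gamma_add_one hpos.ne']
    have hquad : (2 * (m : ℝ) + 1 + 1) * (2 * m + 1) ≤ 16 * ((m : ℝ) + 1) * ((m : ℝ) + ν + 1) := by
      nlinarith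
    have hc : (0 : ℝ) ≤ Real.Gamma (ν + 2) * ((2 * m).factorial : ℝ) := by positivity
    have hb : (0 : ℝ) ≤ 16 * ((m : ℝ) + 1) * ((m : ℝ) + ν + 1) := by positivity
    calc Real.Gamma (ν + 2) * (((2 * m + 1) + 1) * ((2 * m + 1) * (2 * m).factorial) : ℕ)
        = ((2 * (m : ℝ) + 1 + 1) * (2 * m + 1)) *
            (Real.Gamma (ν + 2) * ((2 * m).factorial : ℝ)) := by push_cast; ring
      _ ≤ (16 * ((m : ℝ) + 1) * ((m : ℝ) + ν + 1)) *
            ((ν + 2) * 16 ^ m * (m.factorial : ℝ) * Real.Gamma ((m : ℝ) + ν + 1)) :=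
          mul_le_mul hquad IH hc hb
      _ = (ν + 2) * 16 ^ (m + 1) * (((m + 1) * m.factorial : ℕ) : ℝ) *
            (((m : ℝ) + ν + 1) * Real.Gamma ((m : ℝ) + ν + 1)) := by push_cast; ring

theorem stmt_5 (x ν : ℝ) (hx : 0 < x) (hν : -(3 : ℝ) / 2 < ν) :
    besselI ν x < ((ν + 2) / Real.Gamma (ν + 2)) * (x / 2) ^ ν * Real.exp (2 * x) := by
  have hx2 : (0 : ℝ) < x / 2 := by linarith
  have hν2 : (0 : ℝ) < ν + 2 := by linarith
  have hG : 0 < Real.Gamma (ν + 2) := Real.Gamma_pos_of_pos hν2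
  set G := Real.Gamma (ν + 2) with hGdef
  have hP : (0 : ℝ) < (x / 2) ^ ν := Real.rpow_pos_of_pos hx2 ν
  set C : ℝ := (ν + 2) / G * (x / 2) ^ ν with hCdef
  have hC : 0 < C := by positivity
  set f : ℕ → ℝ := fun m =>
    (x / 2) ^ (2 * (m : ℝ) + ν) / ((m.factorial : ℝ) * Real.Gamma ((m : ℝ) + ν + 1)) with hfdef
  set F : ℕ → ℝ := fun k => if Even k then f (k / 2) else 0 with hFdef
  set H : ℕ → ℝ := fun k => C * ((2 * x) ^ k / (k.factorial : ℝ)) with hHdef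
  have hHpos : ∀ k, 0 < H k := by
    intro k
    have : (0 : ℝ) < 2 * x := by linarith
    positivity
  -- rewrite f m as a monomial
  have hf : ∀ m : ℕ, f m =
      (x / 2) ^ ν * (x ^ 2 / 4) ^ m / ((m.factorial : ℝ) * Real.Gamma ((m : ℝ) + ν + 1)) := by
    intro m
    have : (x / 2) ^ (2 * (m : ℝ) + ν) = (x / 2) ^ ν * (x ^ 2 / 4) ^ m := by
      rw [Real.rpow_add hx2, mul_comm]
      congr 1
      rw [show (2 : ℝ) * (m : ℝ) = ((2 * m : ℕ) : ℝ) by push_cast; ring,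
        Real.rpow_natCast, pow_mul]
      congr 1
      ring
    simp only [hfdef, this]
  -- the termwise bound for m ≥ 1
  have hHval : ∀ m : ℕ, H (2 * m) =
      (ν + 2) * ((x / 2) ^ ν * (16 ^ m * (x ^ 2 / 4) ^ m)) / (G * ((2 * m).factorial : ℝ)) := by
    intro m
    have h16 : (2 * x) ^ (2 * m) = 16 ^ m * (x ^ 2 / 4) ^ m := by
      rw [pow_mul, ← mul_pow]
      congr 1
      ring
    rw [hHdef]
    simp only [hCdef, h16]
    field_simp
  have claim1 : ∀ m : ℕ, 1 ≤ m → f m ≤ H (2 * m) := by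
    intro m hm
    have hΓm : 0 < Real.Gamma ((m : ℝ) + ν + 1) := by
      apply Real.Gamma_pos_of_pos
      have : (1 : ℝ) ≤ (m : ℝ) := by exact_mod_cast hm
      linarith
    have hD : (0 : ℝ) < (m.factorial : ℝ) * Real.Gamma ((m : ℝ) + ν + 1) := by positivity
    have hE : (0 : ℝ) < G * ((2 * m).factorial : ℝ) := by positivity
    rw [hf m, hHval m, div_le_div_iff₀ hD hE]
    have key := besselI_key ν hν m hm
    have hPQ : (0 : ℝ) ≤ (x / 2) ^ ν * (x ^ 2 / 4) ^ m := by positivity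
    calc (x / 2) ^ ν * (x ^ 2 / 4) ^ m * (G * ((2 * m).factorial : ℝ))
        = ((x / 2) ^ ν * (x ^ 2 / 4) ^ m) * (G * ((2 * m).factorial : ℝ)) := by ring
      _ ≤ ((x / 2) ^ ν * (x ^ 2 / 4) ^ m) *
            ((ν + 2) * 16 ^ m * (m.factorial : ℝ) * Real.Gamma ((m : ℝ) + ν + 1)) := by
          apply mul_le_mul_of_nonneg_left _ hPQ
          calc G * ((2 * m).factorial : ℝ)
              = Real.Gamma (ν + 2) * ((2 * m).factorial : ℝ) := by rw [hGdef]
            _ ≤ _ := key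
      _ = (ν + 2) * ((x / 2) ^ ν * (16 ^ m * (x ^ 2 / 4) ^ m)) *
            ((m.factorial : ℝ) * Real.Gamma ((m : ℝ) + ν + 1)) := by ring
  have hfpos : ∀ m : ℕ, 1 ≤ m → 0 ≤ f m := by
    intro m hm
    have hΓm : 0 < Real.Gamma ((m : ℝ) + ν + 1) := by
      apply Real.Gamma_pos_of_pos
      have : (1 : ℝ) ≤ (m : ℝ) := by exact_mod_cast hm
      linarith
    rw [hf m]
    positivity
  -- the m = 0 term
  have habs0 : |f 0| ≤ H 0 := by
    have hf0 : f 0 = (x / 2) ^ ν / Real.Gamma (ν + 1) := by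
      simp only [hfdef]
      norm_num
    have hH0 : H 0 = (x / 2) ^ ν * (ν + 2) / G := by
      simp only [hHdef, hCdef]
      norm_num
      ring
    by_cases hν1 : ν + 1 = 0
    · have : Real.Gamma (ν + 1) = 0 := by rw [hν1]; exact Real.Gamma_zero
      rw [hf0, this, div_zero, abs_zero, hH0]
      positivity
    · have hΓ1 : G = (ν + 1) * Real.Gamma (ν + 1) := by
        rw [hGdef, show ν + 2 = (ν + 1) + 1 by ring, Real.Gamma_add_one hν1]
      have hΓ1ne : Real.Gamma (ν + 1) ≠ 0 := by
        intro h
        rw [h, mul_zero] at hΓ1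
        exact hG.ne' hΓ1
      have hval : f 0 = (x / 2) ^ ν * (ν + 1) / G := by
        rw [hf0, hΓ1]
        field_simp
      rw [hval, hH0, abs_div, abs_of_pos hG, div_le_div_iff_of_pos_right hG, abs_mul,
        abs_of_pos hP]
      apply mul_le_mul_of_nonneg_left _ hP.le
      rw [abs_le]
      constructor <;> linarith
  -- termwise bounds for F vs H
  have habs : ∀ k : ℕ, |F k| ≤ H k := by
    intro k
    by_cases hev : Even k
    · obtain ⟨r, rfl⟩ := hev
      have hr : (r + r) / 2 = r := by omega
      have hevr : Even (r + r) := ⟨r, rfl⟩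
      have hFr : F (r + r) = f r := by simp only [hFdef]; rw [if_pos hevr, hr]
      rcases Nat.eq_zero_or_pos r with h0 | h1
      · subst h0; rw [hFr]; simpa using habs0
      · rw [hFr, abs_of_nonneg (hfpos r h1)]
        have := claim1 r h1
        rwa [show 2 * r = r + r by ring] at this
    · simp only [hFdef, if_neg hev, abs_zero]
      exact (hHpos k).le
  have hle : ∀ k : ℕ, F k ≤ H k := fun k => (le_abs_self _).trans (habs k)
  -- summability
  have hHsum : Summable H := (Real.summable_pow_div_factorial (2 * x)).mul_left C
  have hFsum : Summable F :=
    (Summable.of_nonneg_of_le (fun k => abs_nonneg _) habs hHsum).of_abs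
  -- besselI equals the sum of F
  have hbesselI : besselI ν x = ∑' k, F k := by
    have hinj : Function.Injective (fun m : ℕ => 2 * m) := fun a b h => by
      simp only at h; omega
    have hsupp : Function.support F ⊆ Set.range (fun m : ℕ => 2 * m) := by
      intro k hk
      by_cases hev : Even k
      · obtain ⟨r, rfl⟩ := hev
        exact ⟨r, by simp only []; omega⟩
      · exact absurd (by simp only [hFdef]; rw [if_neg hev]) hk
    calc besselI ν x = ∑' m : ℕ, f m := rfl
      _ = ∑' m : ℕ, F (2 * m) := by
          apply tsum_congr
          intro m
          have hev : Even (2 * m) := ⟨m, two_mul m⟩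
          simp only [hFdef]
          rw [if_pos hev, Nat.mul_div_cancel_left m (by norm_num : 0 < 2)]
      _ = ∑' k, F k := hinj.tsum_eq hsupp
  -- strict inequality at index 1
  have h1 : F 1 < H 1 := by
    have : F 1 = 0 := by simp [hFdef, Nat.not_even_one]
    rw [this]
    exact hHpos 1
  have hlt : ∑' k, F k < ∑' k, H k := Summable.tsum_lt_tsum hle h1 hFsum hHsum
  have hHval2 : ∑' k, H k = C * Real.exp (2 * x) := by
    rw [hHdef, tsum_mul_left]
    congr 1
    rw [Real.exp_eq_exp_ℝ, NormedSpace.exp_eq_tsum_div]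
  rw [hbesselI]
  calc ∑' k, F k < ∑' k, H k := hlt
    _ = C * Real.exp (2 * x) := hHval2
    _ = (ν + 2) / G * (x / 2) ^ ν * Real.exp (2 * x) := by rw [hCdef]
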